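/- Let α and β be algebraic units in ℂ such that [ℚ(α):ℚ] is coprime to [ℚ(β):ℚ] and [ℚ(αβ):ℚ] = [ℚ(β):ℚ] =: n. Then α^n = 1 or α^n = -1. -/

import Mathlib

set_option maxHeartbeats 1000000

open Polynomial IntermediateField

/-- An algebraic unit: root of a monic integer polynomial with constant term ±1. -/
def IsAlgebraicUnit (α : ℂ) : Prop :=
  ∃ p : Polynomial ℤ, p.Monic ∧ (p.coeff 0 = 1 ∨ p.coeff 0 = -1) ∧ Polynomial.aeval α p = 0

/-- The degree of α over ℚ, i.e. [ℚ(α):ℚ]. -/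
noncomputable def degQ (α : ℂ) : ℕ := (minpoly ℚ α).natDegree

open Module in

lemma minpoly_adjoin_eq {α γ : ℂ} (hα : IsIntegral ℚ α) (hγ : IsIntegral ℚ γ)
    (hco : Nat.Coprime (minpoly ℚ α).natDegree (minpoly ℚ γ).natDegree) :
    (minpoly ℚ γ).map (algebraMap ℚ ℚ⟮α⟯) = minpoly (↥ℚ⟮α⟯) γ := by
  haveI : FiniteDimensional ℚ ℚ⟮α⟯ := adjoin.finiteDimensional hα
  have ha : finrank ℚ ℚ⟮α⟯ = (minpoly ℚ α).natDegree := adjoin.finrank hα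
  have hγF : IsIntegral (↥ℚ⟮α⟯) γ := hγ.tower_top
  have hdvd : minpoly (↥ℚ⟮α⟯) γ ∣ (minpoly ℚ γ).map (algebraMap ℚ ℚ⟮α⟯) :=
    minpoly.dvd_map_of_isScalarTower ℚ (↥ℚ⟮α⟯) γ
  have hmapne : (minpoly ℚ γ).map (algebraMap ℚ ℚ⟮α⟯) ≠ 0 :=
    ((minpoly.monic hγ).map _).ne_zero
  have hd_le : (minpoly (↥ℚ⟮α⟯) γ).natDegree ≤ (minpoly ℚ γ).natDegree := by
    simpa using natDegree_le_of_dvd hdvd hmapne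
  haveI : FiniteDimensional (↥ℚ⟮α⟯) (↥ℚ⟮α⟯)⟮γ⟯ := adjoin.finiteDimensional hγF
  have hdE : finrank (↥ℚ⟮α⟯) (↥ℚ⟮α⟯)⟮γ⟯ = (minpoly (↥ℚ⟮α⟯) γ).natDegree := adjoin.finrank hγF
  haveI : FiniteDimensional ℚ (↥(↥ℚ⟮α⟯)⟮γ⟯) := FiniteDimensional.trans ℚ (↥ℚ⟮α⟯) _
  set x : (↥ℚ⟮α⟯)⟮γ⟯ := ⟨γ, mem_adjoin_simple_self _ γ⟩ with hxdef
  have hγeq : algebraMap (↥(↥ℚ⟮α⟯)⟮γ⟯) ℂ x = γ := rfl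
  have hxint : IsIntegral ℚ x := by
    rwa [← isIntegral_algebraMap_iff (algebraMap (↥(↥ℚ⟮α⟯)⟮γ⟯) ℂ).injective, hγeq]
  have hmx : minpoly ℚ x = minpoly ℚ γ :=
    (minpoly.algebraMap_eq (algebraMap (↥(↥ℚ⟮α⟯)⟮γ⟯) ℂ).injective x).symm
  have hdvd2 : (minpoly ℚ γ).natDegree ∣ finrank ℚ (↥(↥ℚ⟮α⟯)⟮γ⟯) := by
    rw [← hmx]; exact minpoly.degree_dvd hxint
  have htower : finrank ℚ (↥(↥ℚ⟮α⟯)⟮γ⟯)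
      = finrank ℚ (↥ℚ⟮α⟯) * finrank (↥ℚ⟮α⟯) (↥(↥ℚ⟮α⟯)⟮γ⟯) :=
    (finrank_mul_finrank ℚ (↥ℚ⟮α⟯) _).symm
  have hdvd3 : (minpoly ℚ γ).natDegree ∣ (minpoly (↥ℚ⟮α⟯) γ).natDegree := by
    have h1 : (minpoly ℚ γ).natDegree ∣
        (minpoly ℚ α).natDegree * (minpoly (↥ℚ⟮α⟯) γ).natDegree := by
      rwa [← ha, ← hdE, ← htower]
    exact (Nat.Coprime.dvd_of_dvd_mul_left hco.symm h1)
  have hdpos : 0 < (minpoly (↥ℚ⟮α⟯) γ).natDegree := minpoly.natDegree_pos hγF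
  have hdeq : (minpoly (↥ℚ⟮α⟯) γ).natDegree = (minpoly ℚ γ).natDegree :=
    Nat.le_antisymm hd_le (Nat.le_of_dvd hdpos hdvd3)
  exact eq_of_monic_of_dvd_of_natDegree_le (minpoly.monic hγF) ((minpoly.monic hγ).map _)
    hdvd (by simp [hdeq])


lemma unit_props {x : ℂ} (h : IsAlgebraicUnit x) :
    x ≠ 0 ∧ IsIntegral ℤ x ∧ IsIntegral ℤ x⁻¹ := by
  obtain ⟨p, hm, hc, hr⟩ := h
  have hx0 : x ≠ 0 := by
    rintro rfl
    rw [aeval_def, eval₂_at_zero] at hr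
    rcases hc with hc | hc <;> rw [hc] at hr <;> norm_num at hr
  have hint : IsIntegral ℤ x := ⟨p, hm, by rwa [aeval_def] at hr⟩
  refine ⟨hx0, hint, ?_⟩
  have : Invertible x := invertibleOfNonzero hx0
  have hrev : eval₂ (algebraMap ℤ ℂ) x⁻¹ p.reverse = 0 := by
    have := (eval₂_reverse_eq_zero_iff (algebraMap ℤ ℂ) x p).mpr (by rwa [aeval_def] at hr)
    rwa [invOf_eq_right_inv (mul_inv_cancel₀ hx0)] at this
  have htd : p.natTrailingDegree = 0 := by
    rw [Polynomial.natTrailingDegree_eq_zero]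
    rcases hc with hc | hc <;> right <;> rw [hc] <;> norm_num
  have htc : p.trailingCoeff = p.coeff 0 := by rw [trailingCoeff, htd]
  rcases hc with hc | hc
  · exact ⟨p.reverse, by rw [Monic, reverse_leadingCoeff, htc, hc], hrev⟩
  · refine ⟨-p.reverse, ?_, by rw [eval₂_neg, hrev, neg_zero]⟩
    rw [Monic, leadingCoeff_neg, reverse_leadingCoeff, htc, hc, neg_neg]

lemma aeval_inv_reverse {x : ℂ} (hx0 : x ≠ 0) (P : ℚ[X]) (hP : aeval x P = 0) :
    aeval x⁻¹ P.reverse = 0 := by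
  have : Invertible x := invertibleOfNonzero hx0
  have := (eval₂_reverse_eq_zero_iff (algebraMap ℚ ℂ) x P).mpr (by rwa [aeval_def] at hP)
  rwa [invOf_eq_right_inv (mul_inv_cancel₀ hx0), ← aeval_def] at this

lemma minpoly_inv_natDegree_le {x : ℂ} (hx : IsIntegral ℚ x) (hx0 : x ≠ 0) :
    (minpoly ℚ x⁻¹).natDegree ≤ (minpoly ℚ x).natDegree := by
  have hP0 : minpoly ℚ x ≠ 0 := minpoly.ne_zero hx
  have hdvd : minpoly ℚ x⁻¹ ∣ (minpoly ℚ x).reverse :=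
    minpoly.dvd ℚ x⁻¹ (aeval_inv_reverse hx0 _ (minpoly.aeval ℚ x))
  calc (minpoly ℚ x⁻¹).natDegree ≤ (minpoly ℚ x).reverse.natDegree :=
        natDegree_le_of_dvd hdvd (by simpa [Polynomial.reverse_eq_zero] using hP0)
    _ ≤ (minpoly ℚ x).natDegree := reverse_natDegree_le _

lemma minpoly_inv_eq {x : ℂ} (hx : IsIntegral ℚ x) (hx0 : x ≠ 0) :
    minpoly ℚ x⁻¹ = C ((minpoly ℚ x).coeff 0)⁻¹ * (minpoly ℚ x).reverse := by
  have hinv : IsIntegral ℚ x⁻¹ := hx.inv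
  have hc : (minpoly ℚ x).coeff 0 ≠ 0 := minpoly.coeff_zero_ne_zero hx hx0
  have hdeg : (minpoly ℚ x⁻¹).natDegree = (minpoly ℚ x).natDegree := by
    refine le_antisymm (minpoly_inv_natDegree_le hx hx0) ?_
    have := minpoly_inv_natDegree_le hinv (inv_ne_zero hx0)
    rwa [inv_inv] at this
  have htd : (minpoly ℚ x).natTrailingDegree = 0 :=
    Polynomial.natTrailingDegree_eq_zero.mpr (Or.inr hc)
  have hrevdeg : (minpoly ℚ x).reverse.natDegree = (minpoly ℚ x).natDegree := by
    rw [reverse_natDegree, htd, Nat.sub_zero]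
  have hmon : (C ((minpoly ℚ x).coeff 0)⁻¹ * (minpoly ℚ x).reverse).Monic := by
    have : (minpoly ℚ x).reverse.leadingCoeff = (minpoly ℚ x).coeff 0 := by
      rw [reverse_leadingCoeff, trailingCoeff, htd]
    rw [Monic, leadingCoeff_mul, leadingCoeff_C, this, inv_mul_cancel₀ hc]
  have hdvd : minpoly ℚ x⁻¹ ∣ C ((minpoly ℚ x).coeff 0)⁻¹ * (minpoly ℚ x).reverse :=
    Dvd.dvd.mul_left (minpoly.dvd ℚ x⁻¹ (aeval_inv_reverse hx0 _ (minpoly.aeval ℚ x))) _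
  refine (eq_of_monic_of_dvd_of_natDegree_le (minpoly.monic hinv) hmon hdvd ?_).symm
  rw [hdeg, natDegree_mul (by simpa using inv_ne_zero hc)
    (by simpa [Polynomial.reverse_eq_zero] using minpoly.ne_zero hx), natDegree_C, hrevdeg,
    zero_add]

lemma unit_coeff_zero {x : ℂ} (hx0 : x ≠ 0) (h1 : IsIntegral ℤ x) (h2 : IsIntegral ℤ x⁻¹) :
    (minpoly ℚ x).coeff 0 = 1 ∨ (minpoly ℚ x).coeff 0 = -1 := by
  have hQ : IsIntegral ℚ x := h1.tower_top
  have hQi : IsIntegral ℚ x⁻¹ := h2.tower_top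
  have e1 : minpoly ℚ x = (minpoly ℤ x).map (algebraMap ℤ ℚ) :=
    minpoly.isIntegrallyClosed_eq_field_fractions ℚ ℂ h1
  have e2 : minpoly ℚ x⁻¹ = (minpoly ℤ x⁻¹).map (algebraMap ℤ ℚ) :=
    minpoly.isIntegrallyClosed_eq_field_fractions ℚ ℂ h2
  set k : ℤ := (minpoly ℤ x).coeff 0 with hk
  set k' : ℤ := (minpoly ℤ x⁻¹).coeff 0 with hk'
  have hc1 : (minpoly ℚ x).coeff 0 = (k : ℚ) := by rw [e1, coeff_map]; rfl
  have hc2 : (minpoly ℚ x⁻¹).coeff 0 = (k' : ℚ) := by rw [e2, coeff_map]; rfl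
  have hcinv : (minpoly ℚ x⁻¹).coeff 0 = ((minpoly ℚ x).coeff 0)⁻¹ := by
    rw [minpoly_inv_eq hQ hx0, coeff_C_mul, coeff_zero_reverse, (minpoly.monic hQ).leadingCoeff,
      mul_one]
  have hkk : (k : ℚ) * (k' : ℚ) = 1 := by
    rw [← hc1, ← hc2, hcinv,
      mul_inv_cancel₀ (minpoly.coeff_zero_ne_zero hQ hx0)]
  have : k * k' = 1 := by exact_mod_cast hkk
  have : IsUnit k := IsUnit.of_mul_eq_one _ this
  rcases Int.isUnit_iff.mp this with h | h <;> [left; right] <;> rw [hc1, h] <;> norm_num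


theorem stmt_4 (α β : ℂ) (hα : IsAlgebraicUnit α) (hβ : IsAlgebraicUnit β)
    (hco : Nat.Coprime (degQ α) (degQ β))
    (heq : degQ (α * β) = degQ β) :
    α ^ (degQ β) = 1 ∨ α ^ (degQ β) = -1 := by
  obtain ⟨hα0, hαi, hαv⟩ := unit_props hα
  obtain ⟨hβ0, hβi, hβv⟩ := unit_props hβ
  have hαQ : IsIntegral ℚ α := hαi.tower_top
  have hβQ : IsIntegral ℚ β := hβi.tower_top
  have hab0 : α * β ≠ 0 := mul_ne_zero hα0 hβ0
  have habi : IsIntegral ℤ (α * β) := hαi.mul hβi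
  have habv : IsIntegral ℤ (α * β)⁻¹ := by rw [mul_inv]; exact hαv.mul hβv
  have habQ : IsIntegral ℚ (α * β) := habi.tower_top
  obtain hc₁ := unit_coeff_zero hβ0 hβi hβv
  obtain hc₂ := unit_coeff_zero hab0 habi habv
  have hmβ : (minpoly ℚ β).map (algebraMap ℚ ℚ⟮α⟯) = minpoly (↥ℚ⟮α⟯) β :=
    minpoly_adjoin_eq hαQ hβQ hco
  have hcoab : Nat.Coprime (minpoly ℚ α).natDegree (minpoly ℚ (α * β)).natDegree := by
    have : degQ (α*β) = degQ β := heq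
    unfold degQ at this
    rw [this]; exact hco
  have hmab : (minpoly ℚ (α * β)).map (algebraMap ℚ ℚ⟮α⟯) = minpoly (↥ℚ⟮α⟯) (α * β) :=
    minpoly_adjoin_eq hαQ habQ hcoab
  set F := ℚ⟮α⟯ with hF
  set αF : F := AdjoinSimple.gen ℚ α with hαF
  have hαFmap : algebraMap F ℂ αF = α := AdjoinSimple.algebraMap_gen ℚ α
  have hβF : IsIntegral (↥F) β := hβQ.tower_top
  have habF : IsIntegral (↥F) (α * β) := habQ.tower_top
  -- the scaled polynomial
  set q : Polynomial F := (minpoly (↥F) β).scaleRoots αF with hq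
  have hqmonic : q.Monic := (monic_scaleRoots_iff αF).mpr (minpoly.monic hβF)
  have hqroot : aeval (α * β) q = 0 := by
    have h0 : eval₂ (algebraMap F ℂ) β (minpoly (↥F) β) = 0 := by
      rw [← aeval_def]; exact minpoly.aeval _ _
    have := scaleRoots_eval₂_eq_zero (algebraMap F ℂ) (s := αF) h0
    rw [hαFmap] at this
    rw [aeval_def]; exact this
  have hqdvd : minpoly (↥F) (α * β) ∣ q := minpoly.dvd _ _ hqroot
  have hdegβ : (minpoly (↥F) β).natDegree = degQ β := by
    rw [← hmβ, natDegree_map]; rfl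
  have hdegab : (minpoly (↥F) (α * β)).natDegree = degQ β := by
    rw [← hmab, natDegree_map]; exact heq
  have hqeq : q = minpoly (↥F) (α * β) :=
    eq_of_monic_of_dvd_of_natDegree_le (minpoly.monic habF) hqmonic hqdvd
      (by rw [hq, natDegree_scaleRoots, hdegβ, hdegab])
  -- compare constant coefficients
  have hcoeff : algebraMap ℚ F ((minpoly ℚ (α * β)).coeff 0)
      = algebraMap ℚ F ((minpoly ℚ β).coeff 0) * αF ^ (degQ β) := by
    have h1 : (minpoly (↥F) (α * β)).coeff 0 = algebraMap ℚ F ((minpoly ℚ (α * β)).coeff 0) := by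
      rw [← hmab, coeff_map]
    have h2 : q.coeff 0 = algebraMap ℚ F ((minpoly ℚ β).coeff 0) * αF ^ (degQ β) := by
      rw [hq, coeff_scaleRoots, hdegβ, Nat.sub_zero, ← hmβ, coeff_map]
    rw [← h1, ← hqeq, h2]
  have hC : ((minpoly ℚ (α * β)).coeff 0 : ℂ) = ((minpoly ℚ β).coeff 0 : ℂ) * α ^ (degQ β) := by
    have := congrArg (algebraMap F ℂ) hcoeff
    rw [map_mul, map_pow, hαFmap, ← IsScalarTower.algebraMap_apply,
      ← IsScalarTower.algebraMap_apply] at this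
    simpa using this
  rcases hc₁ with h1 | h1 <;> rcases hc₂ with h2 | h2 <;> rw [h1, h2] at hC <;>
    push_cast at hC
  · left; linear_combination -hC
  · right; linear_combination -hC
  · right; linear_combination hC
  · left; linear_combination hC
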